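/- Let n ≥ 4 and let M be an n×n symmetric positive definite matrix with integer entries whose entries have greatest common divisor 1, with associated quadratic form Q(v) = vᵀMv. Let A_{a,m} be an admissible arithmetic progression such that no element of A_{a,m} is represented by Q over ℤ (i.e., for every λ ∈ A_{a,m} there is no v ∈ ℤ^n with vᵀMv = λ). Then there exists a prime p dividing m such that a is not represented by Q over the p-adic integers ℤ_p. -/

import Mathlib

open Matrix

/-- The arithmetic progression `A_{a,m} = {a + m·x : x ∈ ℕ ∪ {0}}`. -/
def AP (a m : ℕ) : Set ℕ := {n | ∃ x : ℕ, n = a + m * x}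

/-- `A_{a,m}` (with `0 < a < m`) is admissible if `ord_p a < ord_p m`
for every prime `p` dividing `m`. -/
def Admissible (a m : ℕ) : Prop :=
  0 < a ∧ a < m ∧ ∀ p : ℕ, p.Prime → p ∣ m → padicValNat p a < padicValNat p m

/-- A ring hom transports values of the quadratic form. -/
lemma quadForm_map {R S : Type*} [CommRing R] [CommRing S] {n : ℕ}
    (M : Matrix (Fin n) (Fin n) ℤ) (f : R →+* S) (v : Fin n → R) :
    f (v ⬝ᵥ (M.map (Int.cast : ℤ → R)).mulVec v)
      = (f ∘ v) ⬝ᵥ (M.map (Int.cast : ℤ → S)).mulVec (f ∘ v) := by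
  rw [RingHom.map_dotProduct]
  have h3 : (f : R → S) ∘ ((M.map (Int.cast : ℤ → R)) *ᵥ v)
      = ((M.map (Int.cast : ℤ → R)).map f) *ᵥ ((f : R → S) ∘ v) :=
    funext fun i => RingHom.map_mulVec f _ v i
  rw [h3, Matrix.map_map]
  rw [show (f : R → S) ∘ (Int.cast : ℤ → R) = (Int.cast : ℤ → S) from
    funext fun z => map_intCast f z]

/-- Transport of representability along a ring hom. -/
lemma rep_map {R S : Type*} [CommRing R] [CommRing S] {n : ℕ}
    (M : Matrix (Fin n) (Fin n) ℤ) (f : R →+* S) (a : ℤ) (v : Fin n → R)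
    (h : v ⬝ᵥ (M.map (Int.cast : ℤ → R)).mulVec v = (a : R)) :
    (f ∘ v) ⬝ᵥ (M.map (Int.cast : ℤ → S)).mulVec (f ∘ v) = (a : S) := by
  have h2 := congrArg f h
  rwa [quadForm_map, map_intCast] at h2

/-- Representability in a product ring from representability in the factors. -/
lemma rep_pair {R1 R2 : Type*} [CommRing R1] [CommRing R2] {n : ℕ}
    (M : Matrix (Fin n) (Fin n) ℤ) (a : ℤ) (w1 : Fin n → R1) (w2 : Fin n → R2)
    (h1 : w1 ⬝ᵥ (M.map (Int.cast : ℤ → R1)).mulVec w1 = (a : R1))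
    (h2 : w2 ⬝ᵥ (M.map (Int.cast : ℤ → R2)).mulVec w2 = (a : R2)) :
    (fun i => (w1 i, w2 i)) ⬝ᵥ (M.map (Int.cast : ℤ → R1 × R2)).mulVec
      (fun i => (w1 i, w2 i)) = (a : R1 × R2) := by
  set u : Fin n → R1 × R2 := fun i => (w1 i, w2 i) with hu
  apply Prod.ext
  · have := quadForm_map M (RingHom.fst R1 R2) u
    have hcomp : (RingHom.fst R1 R2 : R1 × R2 → R1) ∘ u = w1 := rfl
    rw [hcomp] at this
    rw [show (u ⬝ᵥ (M.map (Int.cast : ℤ → R1 × R2)).mulVec u).fst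
        = RingHom.fst R1 R2 (u ⬝ᵥ (M.map (Int.cast : ℤ → R1 × R2)).mulVec u) from rfl,
      this, h1, show ((a : R1 × R2)).fst = RingHom.fst R1 R2 (a : R1 × R2) from rfl,
      map_intCast]
  · have := quadForm_map M (RingHom.snd R1 R2) u
    have hcomp : (RingHom.snd R1 R2 : R1 × R2 → R2) ∘ u = w2 := rfl
    rw [hcomp] at this
    rw [show (u ⬝ᵥ (M.map (Int.cast : ℤ → R1 × R2)).mulVec u).snd
        = RingHom.snd R1 R2 (u ⬝ᵥ (M.map (Int.cast : ℤ → R1 × R2)).mulVec u) from rfl,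
      this, h2, show ((a : R1 × R2)).snd = RingHom.snd R1 R2 (a : R1 × R2) from rfl,
      map_intCast]

theorem excluded_AP_has_local_obstruction
    (n : ℕ) (hn : 4 ≤ n) (M : Matrix (Fin n) (Fin n) ℤ)
    (hsym : M.IsSymm)
    (hpos : ∀ v : Fin n → ℤ, v ≠ 0 → 0 < v ⬝ᵥ M.mulVec v)
    (hgcd : Finset.univ.gcd (fun ij : Fin n × Fin n => M ij.1 ij.2) = 1)
    (a m : ℕ) (hadm : Admissible a m)
    (hexc : ∀ N ∈ AP a m, ¬∃ v : Fin n → ℤ, v ⬝ᵥ M.mulVec v = (N : ℤ)) :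
    ∃ p : ℕ, ∃ _ : Fact p.Prime, p ∣ m ∧
      ¬∃ v : Fin n → ℤ_[p],
        v ⬝ᵥ (M.map (Int.cast : ℤ → ℤ_[p])).mulVec v = (a : ℤ_[p]) := by
  obtain ⟨ha0, ham, -⟩ := hadm
  have hm0 : 0 < m := lt_trans ha0 ham
  by_contra hcon
  push_neg at hcon
  -- Step 1: for every divisor k of m, a is represented over ZMod k.
  have key : ∀ k : ℕ, k ∣ m → ∃ w : Fin n → ZMod k,
      w ⬝ᵥ (M.map (Int.cast : ℤ → ZMod k)).mulVec w = ((a : ℤ) : ZMod k) := by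
    intro k
    induction k using Nat.recOnPrimeCoprime with
    | zero => intro h0; exact absurd ((Nat.zero_dvd).mp h0) (by omega)
    | prime_pow p e hp =>
      intro hdvd
      rcases Nat.eq_zero_or_pos e with rfl | he
      · haveI : Subsingleton (ZMod (p ^ 0)) := by rw [pow_zero]; infer_instance
        exact ⟨0, Subsingleton.elim _ _⟩
      have hpm : p ∣ m := (dvd_pow_self p he.ne').trans hdvd
      haveI hfact : Fact p.Prime := ⟨hp⟩
      obtain ⟨v, hv⟩ := hcon p hfact hpm
      have hv' : v ⬝ᵥ (M.map (Int.cast : ℤ → ℤ_[p])).mulVec v = ((a : ℤ) : ℤ_[p]) := by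
        rw [hv]; push_cast; ring
      exact ⟨_, rep_map M (PadicInt.toZModPow e) (a : ℤ) v hv'⟩
    | coprime k1 k2 hk1 hk2 hco ih1 ih2 =>
      intro hdvd
      obtain ⟨w1, hw1⟩ := ih1 (dvd_trans (Dvd.intro k2 rfl) hdvd)
      obtain ⟨w2, hw2⟩ := ih2 (dvd_trans (Dvd.intro_left k1 rfl) hdvd)
      have hpair := rep_pair M (a : ℤ) w1 w2 hw1 hw2
      have e := (ZMod.chineseRemainder hco).symm
      exact ⟨_, rep_map M (e : ZMod k1 × ZMod k2 →+* ZMod (k1 * k2)) (a : ℤ) _ hpair⟩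
  -- Step 2: a is represented over ZMod m; lift to ℤ.
  obtain ⟨w, hw⟩ := key m dvd_rfl
  choose W hW using fun i => ZMod.intCast_surjective (w i)
  have hMM : M.map ((Int.cast : ℤ → ℤ)) = M := by ext i j; simp
  set t : ℤ := W ⬝ᵥ M.mulVec W with ht
  have hbase : W ⬝ᵥ (M.map (Int.cast : ℤ → ℤ)).mulVec W = ((t : ℤ) : ℤ) := by
    rw [hMM]
  have h2 := rep_map M (Int.castRingHom (ZMod m)) t W hbase
  have hcw : ((Int.castRingHom (ZMod m) : ℤ → ZMod m) ∘ W) = w := funext fun i => hW i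
  have hWcast : ((t : ℤ) : ZMod m) = ((a : ℤ) : ZMod m) := by
    rw [← h2, hcw]; exact hw
  -- the value Q(W) is a nonnegative integer ≡ a (mod m)
  have hdvd : (m : ℤ) ∣ t - (a : ℤ) :=
    Int.ModEq.dvd ((ZMod.intCast_eq_intCast_iff _ _ _).mp hWcast).symm
  have hW0 : W ≠ 0 := by
    intro h0
    have ht0 : t = 0 := by
      rw [ht, h0]; simp
    rw [ht0] at hdvd
    have hia : (m : ℤ) ∣ (a : ℤ) := by
      rw [zero_sub, dvd_neg] at hdvd; exact hdvd
    have hma : m ∣ a := Int.ofNat_dvd.mp hia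
    have := Nat.le_of_dvd ha0 hma
    omega
  have htpos : 0 < t := hpos W hW0
  have hta : (a : ℤ) ≤ t := by
    by_contra hlt
    push_neg at hlt
    have h1 : (m : ℤ) ∣ (a : ℤ) - t := (dvd_sub_comm).mp hdvd
    have h2 : 0 < (a : ℤ) - t := by omega
    have h3 : (a : ℤ) - t < m := by
      have : (a : ℤ) < m := by exact_mod_cast ham
      omega
    have := Int.le_of_dvd h2 h1
    omega
  obtain ⟨x, hx⟩ := hdvd
  have hx0 : 0 ≤ x := by
    rcases le_or_gt 0 x with h | h
    · exact h
    · exfalso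
      have : (m : ℤ) * x < 0 := mul_neg_of_pos_of_neg (by exact_mod_cast hm0) h
      omega
  refine hexc t.toNat ⟨x.toNat, ?_⟩ ⟨W, ?_⟩
  · have h5 : (x.toNat : ℤ) = x := Int.toNat_of_nonneg hx0
    have h6 : ((a + m * x.toNat : ℕ) : ℤ) = ((t.toNat : ℕ) : ℤ) := by
      rw [Int.toNat_of_nonneg htpos.le]; push_cast [h5]; omega
    exact_mod_cast h6.symm
  · rw [Int.toNat_of_nonneg (le_of_lt htpos)]
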